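/- Let q = 2n+1 be an odd prime power, let χ be a generator of the group of ℂ-valued multiplicative characters of F_q^×, and let d ∈ F_q^×. Then the characteristic polynomial of the n×n complex matrix M_q(d) = [φ(s_i + d·s_j)]_{1≤i,j≤n} equals ∏_{k=1}^{n} (X − λ_k(d)); that is, λ_1(d), λ_2(d), …, λ_n(d) are exactly all the eigenvalues of M_q(d), counted with multiplicity. -/
import Mathlib

open Finset Polynomial

/-- The quadratic character of a finite field `F`, viewed as a `ℂ`-valued
multiplicative character. -/
noncomputable def phiC (F : Type*) [Field F] [Fintype F] [DecidableEq F] : MulChar F ℂ :=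
  (quadraticChar F).ringHomComp (Int.castRingHom ℂ)

lemma charpoly_conj_aux {n : ℕ} (P D Q : Matrix (Fin n) (Fin n) ℂ)
    (hPQ : P * Q = 1) : (P * D * Q).charpoly = D.charpoly := by
  have hmap : P.map (Polynomial.C : ℂ → ℂ[X]) * Q.map Polynomial.C = 1 := by
    rw [← Matrix.map_mul (f := (Polynomial.C : ℂ →+* ℂ[X])), hPQ]
    exact Matrix.map_one _ (map_zero _) (map_one _)
  have key : Matrix.charmatrix (P * D * Q) =
      P.map Polynomial.C * Matrix.charmatrix D * Q.map Polynomial.C := by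
    unfold Matrix.charmatrix
    rw [mul_sub, sub_mul]
    congr 1
    · have hc : Commute (Matrix.scalar (Fin n) (X : ℂ[X]))
          (Q.map (Polynomial.C : ℂ → ℂ[X])) :=
        Matrix.scalar_commute _ (fun r' => Commute.all _ _) _
      refine Eq.symm ?_
      calc P.map Polynomial.C * Matrix.scalar (Fin n) (X : ℂ[X]) * Q.map Polynomial.C
          = P.map Polynomial.C * (Matrix.scalar (Fin n) (X : ℂ[X]) * Q.map Polynomial.C) := by
            rw [mul_assoc]
        _ = P.map Polynomial.C * (Q.map Polynomial.C * Matrix.scalar (Fin n) (X : ℂ[X])) := by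
            rw [hc.eq]
        _ = (P.map Polynomial.C * Q.map Polynomial.C) * Matrix.scalar (Fin n) (X : ℂ[X]) := by
            rw [mul_assoc]
        _ = Matrix.scalar (Fin n) (X : ℂ[X]) := by rw [hmap, one_mul]
    · show (Polynomial.C : ℂ →+* ℂ[X]).mapMatrix (P * D * Q) = _
      simp only [RingHom.mapMatrix_apply]
      rw [Matrix.map_mul (f := (Polynomial.C : ℂ →+* ℂ[X])),
        Matrix.map_mul (f := (Polynomial.C : ℂ →+* ℂ[X]))]
  unfold Matrix.charpoly
  rw [key, Matrix.det_mul, Matrix.det_mul]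
  have : (P.map (Polynomial.C : ℂ → ℂ[X])).det * (Q.map Polynomial.C).det = 1 := by
    rw [← Matrix.det_mul, hmap, Matrix.det_one]
  calc (P.map (Polynomial.C : ℂ → ℂ[X])).det * (Matrix.charmatrix D).det
        * (Q.map Polynomial.C).det
      = (Matrix.charmatrix D).det *
        ((P.map (Polynomial.C : ℂ → ℂ[X])).det * (Q.map Polynomial.C).det) := by ring
    _ = (Matrix.charmatrix D).det := by rw [this, mul_one]

lemma charpoly_diagonal_aux {n : ℕ} (v : Fin n → ℂ) :
    (Matrix.diagonal v).charpoly = ∏ i : Fin n, (X - C (v i)) := by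
  have : Matrix.charmatrix (Matrix.diagonal v)
      = Matrix.diagonal (fun i => (X : ℂ[X]) - C (v i)) := by
    ext i j
    rcases eq_or_ne i j with rfl | hij
    · rw [Matrix.charmatrix_apply_eq, Matrix.diagonal_apply_eq, Matrix.diagonal_apply_eq]
    · rw [Matrix.charmatrix_apply_ne _ _ _ hij, Matrix.diagonal_apply_ne _ hij,
        Matrix.diagonal_apply_ne _ hij, map_zero, neg_zero]
  rw [Matrix.charpoly, this, Matrix.det_diagonal]

/-- Let `q = 2n+1` be an odd prime power, `χ` a generator of the group of `ℂ`-valued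
multiplicative characters of `F_q`, and `d ∈ F_q^×`.  Then the characteristic polynomial
of the `n × n` matrix `M_q(d) = [φ(s_i + d s_j)]_{1 ≤ i,j ≤ n}` equals
`∏_{k=1}^{n} (X - λ_k(d))`, where `λ_k(d) = ∑_{s ∈ S_q} φ(1 + d s) χ^k(s)`; that is,
`λ_1(d), …, λ_n(d)` are exactly the eigenvalues of `M_q(d)` with multiplicity. -/
theorem stmt9 (F : Type*) [Field F] [Fintype F] [DecidableEq F]
    (q n : ℕ) (hq : q = Fintype.card F) (hqn : q = 2 * n + 1)
    (χ : MulChar F ℂ) (hχ : ∀ ψ : MulChar F ℂ, ψ ∈ Subgroup.zpowers χ)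
    (d : F) (hd : d ≠ 0)
    (s : ℕ → F) (hs0 : s 0 = 0) (hs1 : s 1 = 1)
    (hsinj : Set.InjOn s (Set.Iic n))
    (hsim : s '' (Set.Iic n) = {x : F | IsSquare x})
    (lam : ℕ → ℂ)
    (hlam : ∀ k : ℕ, lam k =
      ∑ x ∈ Finset.univ.filter fun x : F => IsSquare x, phiC F (1 + d * x) * (χ ^ k) x) :
    (Matrix.of fun i j : Fin n =>
        phiC F (s ((i : ℕ) + 1) + d * s ((j : ℕ) + 1))).charpoly =
      ∏ k ∈ Finset.Icc 1 n, (Polynomial.X - Polynomial.C (lam k)) := by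
  classical
  have hcard : Fintype.card F = 2 * n + 1 := by rw [← hq, hqn]
  have hn1 : 1 ≤ n := by
    by_contra h
    have hn0 : n = 0 := by omega
    have := Fintype.one_lt_card (α := F)
    omega
  -- the enumeration of nonzero squares
  set e : Fin n → F := fun j => s ((j : ℕ) + 1) with he
  have hmemIic : ∀ j : Fin n, ((j : ℕ) + 1) ∈ Set.Iic n := fun j => by
    simp only [Set.mem_Iic]; omega
  have hesq : ∀ j : Fin n, IsSquare (e j) := by
    intro j
    have : e j ∈ s '' Set.Iic n := ⟨(j : ℕ) + 1, hmemIic j, rfl⟩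
    rw [hsim] at this
    exact this
  have hene : ∀ j : Fin n, e j ≠ 0 := by
    intro j h
    have h0 : s ((j : ℕ) + 1) = s 0 := by rw [hs0]; exact h
    have := hsinj (hmemIic j) (by simp : (0 : ℕ) ∈ Set.Iic n) h0
    omega
  have heinj : Function.Injective e := by
    intro a b hab
    have := hsinj (hmemIic a) (hmemIic b) hab
    exact Fin.ext (by omega)
  set T : Finset F := Finset.univ.image e with hT
  have hTmem : ∀ x : F, x ∈ T ↔ IsSquare x ∧ x ≠ 0 := by
    intro x
    constructor
    · rintro hx
      rw [hT, Finset.mem_image] at hx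
      obtain ⟨j, -, rfl⟩ := hx
      exact ⟨hesq j, hene j⟩
    · rintro ⟨hxsq, hxne⟩
      have : x ∈ s '' Set.Iic n := by rw [hsim]; exact hxsq
      obtain ⟨m, hm, rfl⟩ := this
      have hmne : m ≠ 0 := by rintro rfl; exact hxne hs0
      rw [hT, Finset.mem_image]
      refine ⟨⟨m - 1, by simp only [Set.mem_Iic] at hm; omega⟩, Finset.mem_univ _, ?_⟩
      show s (m - 1 + 1) = s m
      congr 1; omega
  have hTcard : T.card = n := by
    rw [hT, Finset.card_image_of_injective _ heinj, Finset.card_univ, Fintype.card_fin]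
  -- sums over Fin n become sums over T
  have hsumT : ∀ f : F → ℂ, (∑ j : Fin n, f (e j)) = ∑ x ∈ T, f x := by
    intro f
    rw [hT, Finset.sum_image (fun a _ b _ h => heinj h)]
  -- multiplication by a nonzero square permutes T
  have hmulT : ∀ u : F, IsSquare u → u ≠ 0 → ∀ f : F → ℂ,
      (∑ x ∈ T, f (u * x)) = ∑ x ∈ T, f x := by
    intro u hu hune f
    refine Finset.sum_nbij' (fun x => u * x) (fun y => u⁻¹ * y) ?_ ?_ ?_ ?_ ?_
    · intro a ha
      rw [hTmem] at ha ⊢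
      exact ⟨hu.mul ha.1, mul_ne_zero hune ha.2⟩
    · intro a ha
      rw [hTmem] at ha ⊢
      obtain ⟨c, hc⟩ := hu
      obtain ⟨b, hb⟩ := ha.1
      have hcne : c ≠ 0 := by rintro rfl; exact hune (by rw [hc, mul_zero])
      refine ⟨⟨c⁻¹ * b, ?_⟩, mul_ne_zero (inv_ne_zero hune) ha.2⟩
      rw [hc, hb]; field_simp
    · intro a ha; field_simp
    · intro a ha; field_simp
    · intro a ha; rfl
  -- lambdas as sums over T
  have hlamT : ∀ k : ℕ, lam k = ∑ x ∈ T, phiC F (1 + d * x) * (χ ^ k) x := by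
    intro k
    rw [hlam k]
    have hset : (Finset.univ.filter fun x : F => IsSquare x) = insert 0 T := by
      ext x
      simp only [Finset.mem_filter, Finset.mem_univ, true_and, Finset.mem_insert, hTmem]
      constructor
      · intro hx
        rcases eq_or_ne x 0 with rfl | hne
        · exact Or.inl rfl
        · exact Or.inr ⟨hx, hne⟩
      · rintro (rfl | ⟨hx, -⟩)
        · exact ⟨0, by simp⟩
        · exact hx
    have h0T : (0 : F) ∉ T := fun h => ((hTmem 0).mp h).2 rfl
    rw [hset, Finset.sum_insert h0T]
    have : (χ ^ k) (0 : F) = 0 := MulChar.map_nonunit _ (by simp)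
    rw [this, mul_zero, zero_add]
  -- phiC is 1 on nonzero squares
  have hphi1 : ∀ x : F, IsSquare x → x ≠ 0 → phiC F x = 1 := by
    intro x hsq hne
    have : quadraticChar F x = 1 := (quadraticChar_one_iff_isSquare hne).mpr hsq
    show ((quadraticChar F x : ℤ) : ℂ) = 1
    rw [this]; norm_num
  -- order of χ
  have horder : orderOf χ = 2 * n := by
    haveI : NeZero ((Monoid.exponent Fˣ : ℕ) : ℂ) :=
      ⟨Nat.cast_ne_zero.mpr Monoid.exponent_ne_zero_of_finite⟩
    have hcardchar : Nat.card (MulChar F ℂ) = Nat.card Fˣ :=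
      MulChar.card_eq_card_units_of_hasEnoughRootsOfUnity F ℂ
    have htop : Subgroup.zpowers χ = ⊤ := (Subgroup.eq_top_iff' _).mpr hχ
    have h1 : Nat.card ↥(Subgroup.zpowers χ) = orderOf χ := Nat.card_zpowers χ
    rw [htop, Subgroup.card_top, hcardchar] at h1
    have h2 : Nat.card Fˣ = 2 * n := by
      rw [Nat.card_eq_fintype_card, Fintype.card_units, hcard]
      omega
    omega
  -- the matrices
  set M : Matrix (Fin n) (Fin n) ℂ :=
    Matrix.of (fun i j : Fin n => phiC F (e i + d * e j)) with hM
  set P : Matrix (Fin n) (Fin n) ℂ :=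
    Matrix.of (fun j k : Fin n => (χ ^ ((k : ℕ) + 1)) (e j)) with hP
  set Q : Matrix (Fin n) (Fin n) ℂ :=
    Matrix.of (fun k j : Fin n => (n : ℂ)⁻¹ * (χ ^ ((k : ℕ) + 1))⁻¹ (e j)) with hQ
  set D : Matrix (Fin n) (Fin n) ℂ :=
    Matrix.diagonal (fun k : Fin n => lam ((k : ℕ) + 1)) with hD
  have hnne : (n : ℂ) ≠ 0 := Nat.cast_ne_zero.mpr (by omega)
  -- Q * P = 1
  have hQP : Q * P = 1 := by
    ext k l
    rw [Matrix.mul_apply]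
    simp only [hQ, hP, Matrix.of_apply]
    rw [Finset.sum_congr rfl (fun j _ => mul_assoc ((n : ℂ)⁻¹) _ _), ← Finset.mul_sum]
    have hterm : ∀ j : Fin n,
        (χ ^ ((k : ℕ) + 1))⁻¹ (e j) * (χ ^ ((l : ℕ) + 1)) (e j)
          = ((χ ^ ((k : ℕ) + 1))⁻¹ * χ ^ ((l : ℕ) + 1)) (e j) := by
      intro j
      rw [MulChar.coeToFun_mul, Pi.mul_apply]
    rw [Finset.sum_congr rfl fun j _ => hterm j]
    set ψ : MulChar F ℂ := (χ ^ ((k : ℕ) + 1))⁻¹ * χ ^ ((l : ℕ) + 1) with hψ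
    rcases eq_or_ne k l with rfl | hkl
    · have hψ1 : ψ = 1 := by rw [hψ, inv_mul_cancel]
      have : (∑ j : Fin n, ψ (e j)) = (n : ℂ) := by
        rw [hψ1]
        have : ∀ j : Fin n, (1 : MulChar F ℂ) (e j) = 1 := fun j =>
          MulChar.one_apply (isUnit_iff_ne_zero.mpr (hene j))
        rw [Finset.sum_congr rfl fun j _ => this j]
        simp
      rw [this, inv_mul_cancel₀ hnne, Matrix.one_apply_eq]
    · -- off-diagonal: the character sum vanishes
      have hψz : ψ = χ ^ (((l : ℕ) : ℤ) - ((k : ℕ) : ℤ)) := by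
        rw [hψ]
        rw [show (((l : ℕ) : ℤ) - ((k : ℕ) : ℤ))
            = (((l : ℕ) + 1 : ℕ) : ℤ) + (-(((k : ℕ) + 1 : ℕ) : ℤ)) by push_cast; ring]
        rw [zpow_add, zpow_neg, zpow_natCast, zpow_natCast, mul_comm]
      -- ψ is nontrivial on some nonzero square
      have hex : ∃ u ∈ T, ψ u ≠ 1 := by
        by_contra hcon
        push_neg at hcon
        have hψ2 : ψ * ψ = 1 := by
          apply MulChar.ext
          intro a
          have hane : (a : F) ≠ 0 := Units.ne_zero a
          have ha2 : (a : F) * (a : F) ∈ T :=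
            (hTmem _).mpr ⟨⟨(a : F), rfl⟩, mul_ne_zero hane hane⟩
          have h1 : ψ ((a : F) * (a : F)) = 1 := hcon _ ha2
          rw [map_mul] at h1
          rw [MulChar.coeToFun_mul, Pi.mul_apply, h1, MulChar.one_apply_coe]
        rw [hψz, ← zpow_add] at hψ2
        have hdvd : ((orderOf χ : ℕ) : ℤ) ∣
            (((l : ℕ) : ℤ) - ((k : ℕ) : ℤ)) + (((l : ℕ) : ℤ) - ((k : ℕ) : ℤ)) :=
          orderOf_dvd_iff_zpow_eq_one.mpr hψ2
        rw [horder] at hdvd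
        have hklne : ((l : ℕ) : ℤ) - ((k : ℕ) : ℤ) ≠ 0 := by
          intro h
          exact hkl (Fin.ext (by omega)).symm
        have hlt : |(((l : ℕ) : ℤ) - ((k : ℕ) : ℤ)) + (((l : ℕ) : ℤ) - ((k : ℕ) : ℤ))|
            < ((2 * n : ℕ) : ℤ) := by
          have hk := k.2; have hl := l.2
          rw [abs_lt]
          constructor <;> [push_cast; push_cast] <;> omega
        have hdvd' : ((2 * n : ℕ) : ℤ) ∣
            |(((l : ℕ) : ℤ) - ((k : ℕ) : ℤ)) + (((l : ℕ) : ℤ) - ((k : ℕ) : ℤ))| :=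
          (dvd_abs _ _).mpr hdvd
        have hpos : 0 < |(((l : ℕ) : ℤ) - ((k : ℕ) : ℤ)) + (((l : ℕ) : ℤ) - ((k : ℕ) : ℤ))| :=
          abs_pos.mpr (by omega)
        have := Int.le_of_dvd hpos hdvd'
        omega
      obtain ⟨u, huT, hu1⟩ := hex
      have husq : IsSquare u := ((hTmem u).mp huT).1
      have hune : u ≠ 0 := ((hTmem u).mp huT).2
      have hTsum : (∑ x ∈ T, ψ x) = 0 := by
        have h1 : ψ u * (∑ x ∈ T, ψ x) = ∑ x ∈ T, ψ x := by
          rw [Finset.mul_sum]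
          have : ∀ x ∈ T, ψ u * ψ x = ψ (u * x) := fun x _ => (map_mul ψ u x).symm
          rw [Finset.sum_congr rfl this]
          exact hmulT u husq hune (fun x => ψ x)
        have h2 : (ψ u - 1) * (∑ x ∈ T, ψ x) = 0 := by
          rw [sub_mul, one_mul, h1, sub_self]
        rcases mul_eq_zero.mp h2 with h | h
        · exact absurd (sub_eq_zero.mp h) hu1
        · exact h
      rw [hsumT (fun x => ψ x), hTsum, mul_zero]
      exact (Matrix.one_apply_ne hkl).symm
  have hPQ : P * Q = 1 := mul_eq_one_comm.mpr hQP
  -- the eigenvector relation M * P = P * D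
  have hMP : M * P = P * D := by
    ext i k
    rw [Matrix.mul_apply, hD, Matrix.mul_diagonal]
    simp only [hM, hP, Matrix.of_apply]
    have step1 : (∑ j : Fin n, phiC F (e i + d * e j) * (χ ^ ((k : ℕ) + 1)) (e j))
        = ∑ x ∈ T, phiC F (e i + d * x) * (χ ^ ((k : ℕ) + 1)) x :=
      hsumT (fun x => phiC F (e i + d * x) * (χ ^ ((k : ℕ) + 1)) x)
    have step2 : (∑ x ∈ T, phiC F (e i + d * (e i * x)) * (χ ^ ((k : ℕ) + 1)) (e i * x))
        = ∑ x ∈ T, phiC F (e i + d * x) * (χ ^ ((k : ℕ) + 1)) x :=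
      hmulT (e i) (hesq i) (hene i) (fun x => phiC F (e i + d * x) * (χ ^ ((k : ℕ) + 1)) x)
    have step3 : ∀ x ∈ T, phiC F (e i + d * (e i * x)) * (χ ^ ((k : ℕ) + 1)) (e i * x)
        = (χ ^ ((k : ℕ) + 1)) (e i) * (phiC F (1 + d * x) * (χ ^ ((k : ℕ) + 1)) x) := by
      intro x hx
      have hfac : e i + d * (e i * x) = e i * (1 + d * x) := by ring
      rw [hfac, map_mul, map_mul, hphi1 (e i) (hesq i) (hene i), one_mul]
      ring
    rw [step1, ← step2, Finset.sum_congr rfl step3, ← Finset.mul_sum, ← hlamT ((k : ℕ) + 1)]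
  -- conclude
  have hMconj : M = P * D * Q := by
    calc M = M * (P * Q) := by rw [hPQ, mul_one]
      _ = (M * P) * Q := by rw [mul_assoc]
      _ = P * D * Q := by rw [hMP]
  have : M.charpoly = ∏ i : Fin n, (X - C (lam ((i : ℕ) + 1))) := by
    rw [hMconj, charpoly_conj_aux P D Q hPQ, hD, charpoly_diagonal_aux]
  rw [this]
  rw [Fin.prod_univ_eq_prod_range (fun i => X - C (lam (i + 1))) n]
  have hIcc : Finset.Icc 1 n = (Finset.range n).image (fun k => k + 1) := by
    ext x
    simp only [Finset.mem_Icc, Finset.mem_image, Finset.mem_range]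
    constructor
    · rintro ⟨h1, h2⟩; exact ⟨x - 1, by omega, by omega⟩
    · rintro ⟨y, hy, rfl⟩; omega
  rw [hIcc, Finset.prod_image (fun a _ b _ h => by omega)]
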